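/- Let $n\ge 3$ be an integer, $\kappa>0$ and $R>0$. Suppose $\phi\in C^2([0,R])$ satisfies $\mathcal J\phi(r)=0$ for all $r\in(0,R)$, $\phi'(0)=0$, and $\phi(R)=\kappa R$. Then $\kappa r\le\phi(r)\le\kappa r+\frac{(n-1)\kappa}{r}$ for every $r\in(0,R]$. -/

import Mathlib

open Filter Set Topology

lemma hasDerivAt_cdiv (c x : ℝ) (hx : x ≠ 0) : HasDerivAt (fun y => c / y) (-c / x^2) x := by
  have h : HasDerivAt (fun y : ℝ => c * y⁻¹) _ x := (hasDerivAt_inv hx).const_mul c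
  have e : (fun y : ℝ => c / y) = fun y => c * y⁻¹ := by funext y; rw [div_eq_mul_inv]
  rw [e]
  convert h using 1
  field_simp

lemma hasDerivAt_cdiv2 (c x : ℝ) (hx : x ≠ 0) :
    HasDerivAt (fun y => c / y^2) (-2*c / x^3) x := by
  have hx2 : x^2 ≠ 0 := pow_ne_zero 2 hx
  have h : HasDerivAt (fun y => c / y^2) _ x := (hasDerivAt_const x c).div (hasDerivAt_pow 2 x) hx2
  convert h using 1
  push_cast
  field_simp
  ring

/-- At a local max, if `f` has derivative `g` near `a` and `g` has derivative `c` at `a`,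
then `g a = 0` and `c ≤ 0`. -/
lemma max_second {f g : ℝ → ℝ} {a c : ℝ}
    (hmax : IsLocalMax f a)
    (hfg : ∀ᶠ x in 𝓝 a, HasDerivAt f (g x) x)
    (hg : HasDerivAt g c a) : g a = 0 ∧ c ≤ 0 := by
  have hga : g a = 0 := by
    have hd : deriv f a = g a := hfg.self_of_nhds.deriv
    rw [← hd]; exact hmax.deriv_eq_zero
  refine ⟨hga, ?_⟩
  by_contra hc
  push_neg at hc
  have hslope : Tendsto (slope g a) (𝓝[≠] a) (𝓝 c) :=
    hasDerivAt_iff_tendsto_slope.mp hg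
  have h1 : ∀ᶠ x in 𝓝[>] a, 0 < slope g a x :=
    (hslope.mono_left (nhdsWithin_mono a (by intro x hx; exact ne_of_gt hx))).eventually
      (eventually_gt_nhds hc)
  have h2 : ∀ᶠ x in 𝓝[>] a, f x ≤ f a := hmax.filter_mono nhdsWithin_le_nhds
  have h3 : ∀ᶠ x in 𝓝[>] a, HasDerivAt f (g x) x := hfg.filter_mono nhdsWithin_le_nhds
  have hcomb := (h1.and h2).and h3
  obtain ⟨t, ht, hsub⟩ := mem_nhdsGT_iff_exists_Ioo_subset.mp hcomb
  set b := (a + t) / 2 with hb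
  have hab : a < b := by simp only [hb]; linarith [ht.out]
  have hbt : b < t := by simp only [hb]; linarith [ht.out]
  have hIoo : Ioo a b ⊆ Ioo a t := Ioo_subset_Ioo le_rfl hbt.le
  have hmono : StrictMonoOn f (Icc a b) := by
    apply strictMonoOn_of_deriv_pos (convex_Icc a b)
    · intro x hx
      rcases eq_or_lt_of_le hx.1 with h | h
      · rw [← h]
        exact (hfg.self_of_nhds.differentiableAt).continuousAt.continuousWithinAt
      · exact ((hsub ⟨h, lt_of_le_of_lt hx.2 hbt⟩).2.differentiableAt).continuousAt.continuousWithinAt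
    · intro x hx
      rw [interior_Icc] at hx
      have hxS := hsub (hIoo hx)
      rw [hxS.2.deriv]
      have := hxS.1.1
      have hsl : slope g a x = (g x - g a) / (x - a) := by
        rw [slope_def_field]
      rw [hsl, hga, sub_zero] at this
      have hxa : 0 < x - a := by linarith [hx.1]
      have h4 := mul_pos this hxa
      rwa [div_mul_cancel₀ _ (ne_of_gt hxa)] at h4
  have hfb : f a < f b := hmono ⟨le_rfl, hab.le⟩ ⟨hab.le, le_rfl⟩ hab
  have : f b ≤ f a := (hsub ⟨hab, hbt⟩).1.2
  linarith

/-- Positive derivative at the left endpoint of an interval where `f` is maximized: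
contradiction. -/
lemma not_max_left {f : ℝ → ℝ} {c R : ℝ} (hR : 0 < R) (hf : HasDerivAt f c 0) (hc : 0 < c)
    (h : IsMaxOn f (Icc 0 R) 0) : False := by
  have hslope : Tendsto (slope f 0) (𝓝[≠] (0:ℝ)) (𝓝 c) := hasDerivAt_iff_tendsto_slope.mp hf
  have h1 : ∀ᶠ x in 𝓝[>] (0:ℝ), 0 < slope f 0 x :=
    (hslope.mono_left (nhdsWithin_mono 0 (by intro x hx; exact ne_of_gt hx))).eventually
      (eventually_gt_nhds hc)
  have h2 : Ioo (0:ℝ) R ∈ 𝓝[>] (0:ℝ) := Ioo_mem_nhdsGT_of_mem ⟨le_rfl, hR⟩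
  obtain ⟨x, hx1, hx2⟩ := (h1.and (eventually_mem_set.mpr h2)).exists
  have hsl : slope f 0 x = (f x - f 0) / x := by rw [slope_def_field]; rw [sub_zero]
  rw [hsl] at hx1
  have hx0 : 0 < x := hx2.1
  have h5 := mul_pos hx1 hx0
  rw [div_mul_cancel₀ _ (ne_of_gt hx0)] at h5
  have h6 := h ⟨hx0.le, hx2.2.le⟩
  simp only [mem_setOf_eq] at h6
  have : f x ≤ f 0 := h6
  linarith

/-- The rotationally symmetric self-expander operator
`𝒥 u (r) = u''/(1+u'^2) + ((n-1)/r) u' + (r/2) u' - u/2`. -/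
noncomputable def Jop (n : ℕ) (u : ℝ → ℝ) (r : ℝ) : ℝ :=
  deriv (deriv u) r / (1 + (deriv u r) ^ 2) + ((n : ℝ) - 1) / r * deriv u r
    + r / 2 * deriv u r - u r / 2

set_option maxHeartbeats 1000000 in
/-- Let `n ≥ 3`, `κ > 0`, `R > 0`. If `φ` is `C²`, solves `𝒥 φ = 0` on `(0,R)`,
satisfies `φ'(0) = 0` and `φ(R) = κ R`, then `κ r ≤ φ(r) ≤ κ r + (n-1)κ/r` on `(0,R]`. -/
theorem stmt3 (n : ℕ) (hn : 3 ≤ n) (κ R : ℝ) (hκ : 0 < κ) (hR : 0 < R)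
    (φ : ℝ → ℝ) (hφ : ContDiff ℝ 2 φ)
    (heq : ∀ r : ℝ, 0 < r → r < R → Jop n φ r = 0)
    (h0 : deriv φ 0 = 0) (hbd : φ R = κ * R) :
    ∀ r : ℝ, 0 < r → r ≤ R →
      κ * r ≤ φ r ∧ φ r ≤ κ * r + ((n : ℝ) - 1) * κ / r := by
  have hdφ : Differentiable ℝ φ := hφ.differentiable (by norm_num)
  have hdφ' : Differentiable ℝ (deriv φ) := by
    have h2 : ContDiff ℝ ((1:WithTop ℕ∞)+1) φ := by norm_num; exact hφ
    exact (contDiff_succ_iff_deriv.mp h2).2.2.differentiable (by norm_num)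
  set c : ℝ := ((n:ℝ) - 1) * κ with hc
  have hn3 : (3:ℝ) ≤ (n:ℝ) := by exact_mod_cast hn
  have hcpos : 0 < c := by rw [hc]; nlinarith
  intro r hr hrR
  constructor
  · -- LOWER BOUND
    have hwc : ContinuousOn (fun x => κ * x - φ x) (Icc 0 R) :=
      ((continuous_const.mul continuous_id).sub hdφ.continuous).continuousOn
    obtain ⟨r₀, hr₀mem, hr₀max⟩ :=
      isCompact_Icc.exists_isMaxOn (nonempty_Icc.mpr hR.le) hwc
    have hwr₀ : κ * r₀ - φ r₀ ≤ 0 := by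
      rcases eq_or_lt_of_le hr₀mem.1 with h | h
      · exfalso
        have hder : HasDerivAt (fun x => κ * x - φ x) κ 0 := by
          have : HasDerivAt (fun x => κ * x - φ x) _ 0 := ((hasDerivAt_id (0:ℝ)).const_mul κ).sub (hdφ 0).hasDerivAt
          simpa [h0] using this
        exact not_max_left hR hder hκ (h ▸ hr₀max)
      rcases eq_or_lt_of_le hr₀mem.2 with h2 | h2
      · rw [h2, hbd]; linarith
      · have hloc : IsLocalMax (fun x => κ * x - φ x) r₀ :=
          hr₀max.isLocalMax (Icc_mem_nhds h h2)
        have hfg : ∀ᶠ x in 𝓝 r₀,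
            HasDerivAt (fun y => κ * y - φ y) (κ - deriv φ x) x := by
          filter_upwards with x
          have h' : HasDerivAt (fun y => κ * y - φ y) _ x := ((hasDerivAt_id x).const_mul κ).sub (hdφ x).hasDerivAt
          simpa using h'
        have hg : HasDerivAt (fun x => κ - deriv φ x) (-(deriv (deriv φ) r₀)) r₀ :=
          ((hdφ' r₀).hasDerivAt).const_sub κ
        obtain ⟨hg0, hgle⟩ := max_second hloc hfg hg
        have hp : deriv φ r₀ = κ := by linarith [hg0]
        have hdd : 0 ≤ deriv (deriv φ) r₀ := by linarith
        have he := heq r₀ h h2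
        simp only [Jop, hp] at he
        have h1κ : (0:ℝ) < 1 + κ^2 := by positivity
        have hterm : 0 ≤ deriv (deriv φ) r₀ / (1+κ^2) := div_nonneg hdd h1κ.le
        have hA : 0 ≤ ((n:ℝ)-1)/r₀*κ :=
          mul_nonneg (div_nonneg (by linarith) h.le) hκ.le
        nlinarith [he, hterm, hA, mul_pos hκ h]
    have hle := hr₀max ⟨hr.le, hrR⟩
    simp only [mem_setOf_eq] at hle
    have : κ * r - φ r ≤ κ * r₀ - φ r₀ := hle
    linarith
  · -- UPPER BOUND
    obtain ⟨xm, hxm_mem, hxm⟩ :=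
      isCompact_Icc.exists_isMaxOn (nonempty_Icc.mpr hR.le) hdφ.continuous.continuousOn
    set B : ℝ := max (φ xm) 0 with hB
    have hB0 : 0 ≤ B := le_max_right _ _
    have hB1 : (0:ℝ) < B + 1 := by linarith
    set a : ℝ := min r (c / (B+1)) with ha
    have hapos : 0 < a := lt_min hr (div_pos hcpos hB1)
    have har : a ≤ r := min_le_left _ _
    have haR : a ≤ R := le_trans har hrR
    have hχ : ∀ x : ℝ, 0 < x → HasDerivAt (fun y => κ * y + c / y) (κ - c / x^2) x := by
      intro x hx
      have h1 : HasDerivAt (fun y => κ * y + c / y) _ x := ((hasDerivAt_id x).const_mul κ).add (hasDerivAt_cdiv c x (ne_of_gt hx))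
      convert h1 using 1
      ring
    have hwcont : ContinuousOn (fun x => φ x - (κ * x + c / x)) (Icc a R) := by
      apply hdφ.continuous.continuousOn.sub
      apply ContinuousOn.add ((continuous_const.mul continuous_id).continuousOn)
      exact continuousOn_const.div continuousOn_id
        (fun x hx => ne_of_gt (lt_of_lt_of_le hapos hx.1))
    obtain ⟨r₁, hmem, hmax⟩ :=
      isCompact_Icc.exists_isMaxOn (nonempty_Icc.mpr haR) hwcont
    have key : φ r₁ - (κ * r₁ + c / r₁) ≤ 0 := by
      rcases eq_or_lt_of_le hmem.1 with h | h
      · rw [← h]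
        have hφa : φ a ≤ B :=
          le_trans (hxm ⟨hapos.le, haR⟩) (le_max_left _ _)
        have haux : a ≤ c / (B+1) := min_le_right _ _
        have haux2 : a * (B+1) ≤ c := (le_div_iff₀ hB1).mp haux
        have hca : B + 1 ≤ c / a := (le_div_iff₀ hapos).mpr (by nlinarith)
        nlinarith [mul_pos hκ hapos]
      rcases eq_or_lt_of_le hmem.2 with h2 | h2
      · rw [h2, hbd]
        have : 0 < c / R := div_pos hcpos hR
        linarith
      · have hr₁pos : 0 < r₁ := lt_trans hapos h
        have hr₁0 : r₁ ≠ 0 := ne_of_gt hr₁pos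
        have hloc : IsLocalMax (fun x => φ x - (κ * x + c / x)) r₁ :=
          hmax.isLocalMax (Icc_mem_nhds h h2)
        have hfg : ∀ᶠ x in 𝓝 r₁,
            HasDerivAt (fun y => φ y - (κ * y + c / y))
              (deriv φ x - (κ - c / x^2)) x := by
          filter_upwards [Ioi_mem_nhds hr₁pos] with x hx
          exact ((hdφ x).hasDerivAt).sub (hχ x hx)
        have hg : HasDerivAt (fun x => deriv φ x - (κ - c / x^2))
            (deriv (deriv φ) r₁ - 2*c/r₁^3) r₁ := by
          have h1 : HasDerivAt (fun x => deriv φ x - (κ - c / x^2)) _ r₁ := ((hdφ' r₁).hasDerivAt).sub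
            ((hasDerivAt_cdiv2 c r₁ hr₁0).const_sub κ)
          convert h1 using 1
          ring
        obtain ⟨hg0, hgle⟩ := max_second hloc hfg hg
        have hp : deriv φ r₁ = κ - c/r₁^2 := by linarith [hg0]
        have he := heq r₁ hr₁pos h2
        simp only [Jop, hp] at he
        -- he : d2/(1+p²) + ((n-1)/r₁)p + (r₁/2)p - φ r₁/2 = 0 with p = κ - c/r₁²
        set d2 := deriv (deriv φ) r₁ with hd2
        set p : ℝ := κ - c/r₁^2 with hpdef
        have h1p : (0:ℝ) < 1 + p^2 := by positivity
        have hT0 : (0:ℝ) ≤ 2*c/r₁^3 := by positivity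
        have hq : φ r₁/2 - (((n:ℝ)-1)/r₁*p + r₁/2*p) ≤ 2*c/r₁^3 := by
          have hqe : d2/(1+p^2) = φ r₁/2 - (((n:ℝ)-1)/r₁*p + r₁/2*p) := by linarith [he]
          have hd2T : d2 ≤ 2*c/r₁^3 := by linarith [hgle]
          have hdq : d2 = (φ r₁/2 - (((n:ℝ)-1)/r₁*p + r₁/2*p)) * (1+p^2) := by
            rw [← hqe]; field_simp
          rcases le_or_gt (φ r₁/2 - (((n:ℝ)-1)/r₁*p + r₁/2*p)) 0 with hq0 | hq0
          · linarith
          · nlinarith [sq_nonneg p]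
        -- expand p and conclude
        have expand : ((n:ℝ)-1)/r₁*p + r₁/2*p + 2*c/r₁^3
            = c/r₁ - ((n:ℝ)-1)*(c/r₁^3) + κ*r₁/2 - c/r₁/2 + 2*(c/r₁^3) := by
          rw [hpdef, hc]
          field_simp
          ring
        have hcr3 : 0 ≤ c/r₁^3 := by positivity
        nlinarith [hq, expand, hcr3, hn3]
    have hle := hmax ⟨har, hrR⟩
    simp only [mem_setOf_eq] at hle
    have h7 : φ r - (κ * r + c / r) ≤ φ r₁ - (κ * r₁ + c / r₁) := hle
    have : φ r ≤ κ * r + c / r := by linarith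
    calc φ r ≤ κ * r + c / r := this
      _ = κ * r + ((n:ℝ)-1) * κ / r := by rw [hc]
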